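/- Oxtoby's theorem: a nonempty topological space X is a Baire space if and only if player I has no winning strategy in the Choquet game on X. -/

import Mathlib

open Set Topology

/-- The history of player II's moves `V 0, …, V (n-1)`. -/
def hist {X : Type} (V : ℕ → Set X) (n : ℕ) : List (Set X) :=
  List.ofFn fun i : Fin n => V i

/-- Player II has played legally (nonempty open sets refining I's moves, which are
produced by the strategy `σ` from the history of II's moves) for the first `n`
rounds. -/
def LegalSoFar {X : Type} [TopologicalSpace X]
    (σ : List (Set X) → Set X) (V : ℕ → Set X) (n : ℕ) : Prop :=
  ∀ m < n, IsOpen (V m) ∧ (V m).Nonempty ∧ V m ⊆ σ (hist V m)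

/-- `σ` is a winning strategy for player I in the Choquet game: it always answers
legal play by II with a legal move (a nonempty open set contained in II's last
move), and in every run in which II plays legally the intersection of the moves
is empty. -/
def WinningStratI (X : Type) [TopologicalSpace X] (σ : List (Set X) → Set X) : Prop :=
  (∀ (V : ℕ → Set X) (n : ℕ), LegalSoFar σ V n →
      IsOpen (σ (hist V n)) ∧ (σ (hist V n)).Nonempty ∧
        ∀ m, n = m + 1 → σ (hist V n) ⊆ V m) ∧
    ∀ V : ℕ → Set X, (∀ n, LegalSoFar σ V n → IsOpen (V n) ∧ (V n).Nonempty ∧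
        V n ⊆ σ (hist V n)) →
      (⋂ n, σ (hist V n)) = ∅

section helpers

variable {X : Type} [TopologicalSpace X] {σ : List (Set X) → Set X}

lemma hist_length (V : ℕ → Set X) (n : ℕ) : (hist V n).length = n := by
  simp [hist]

lemma hist_succ (V : ℕ → Set X) (n : ℕ) : hist V (n+1) = hist V n ++ [V n] := by
  unfold hist
  rw [List.ofFn_succ', List.concat_eq_append]
  congr 1

lemma hist_congr {V V' : ℕ → Set X} {n : ℕ} (h : ∀ m < n, V m = V' m) :
    hist V n = hist V' n := by
  unfold hist
  congr 1
  funext i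
  exact h i i.isLt

lemma legalSoFar_congr {V V' : ℕ → Set X} {n : ℕ} (h : ∀ m < n, V m = V' m)
    (hl : LegalSoFar σ V n) : LegalSoFar σ V' n := by
  intro m hm
  have h1 := hl m hm
  have h2 : V m = V' m := h m hm
  have h3 : hist V m = hist V' m := hist_congr (fun k hk => h k (hk.trans hm))
  rw [← h2, ← h3]
  exact h1

/-- Padding a list to a function. -/
def pad (p : List (Set X)) : ℕ → Set X := fun i => p.getD i ∅

lemma hist_pad (p : List (Set X)) : hist (pad p) p.length = p := by
  conv_rhs => rw [← (List.ofFn_getElem : List.ofFn (fun i : Fin p.length => p[i]) = p)]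
  unfold hist pad
  congr 1
  funext i
  exact List.getD_eq_getElem p ∅ i.isLt

lemma pad_agree {V : ℕ → Set X} {n : ℕ} : ∀ m < n, pad (hist V n) m = V m := by
  intro m hm
  unfold pad hist
  rw [List.getD_eq_getElem _ _ (by simpa using hm), List.getElem_ofFn]

/-- Legality for lists. -/
def LegalL (σ : List (Set X) → Set X) (p : List (Set X)) : Prop :=
  LegalSoFar σ (pad p) p.length

lemma legalL_iff (V : ℕ → Set X) (n : ℕ) :
    LegalSoFar σ V n ↔ LegalL σ (hist V n) := by
  unfold LegalL
  rw [hist_length]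
  constructor
  · intro h; exact legalSoFar_congr (fun m hm => (pad_agree m hm).symm) h
  · intro h; exact legalSoFar_congr pad_agree h

lemma legalL_nil : LegalL σ ([] : List (Set X)) := by
  intro m hm; simp at hm

lemma legalL_append {p : List (Set X)} {V : Set X} (hp : LegalL σ p)
    (hV : IsOpen V ∧ V.Nonempty ∧ V ⊆ σ p) : LegalL σ (p ++ [V]) := by
  set W : ℕ → Set X := Function.update (pad p) p.length V with hW
  have hWne : ∀ k, k ≠ p.length → W k = pad p k := by
    intro k hk
    rw [hW]
    exact Function.update_of_ne hk _ _
  have hWeq : W p.length = V := by rw [hW]; exact Function.update_self _ _ _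
  have hhist : ∀ m ≤ p.length, hist W m = hist (pad p) m := by
    intro m hm
    apply hist_congr
    intro k hk
    exact hWne k (by omega)
  have hWl : LegalSoFar σ W (p.length + 1) := by
    intro m hm
    rcases Nat.lt_succ_iff_lt_or_eq.mp hm with hm' | hm'
    · have := hp m hm'
      rw [hWne m (by omega), hhist m hm'.le]
      exact this
    · subst hm'
      rw [hWeq, hhist p.length le_rfl, hist_pad]
      exact hV
  have : LegalL σ (hist W (p.length + 1)) := (legalL_iff W _).mp hWl
  have e : hist W (p.length + 1) = p ++ [V] := by
    rw [hist_succ, hhist p.length le_rfl, hist_pad, hWeq]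
  rwa [e] at this

lemma strat_legal (hσ : WinningStratI X σ) {p : List (Set X)} (hp : LegalL σ p) :
    IsOpen (σ p) ∧ (σ p).Nonempty := by
  have := hσ.1 (pad p) p.length hp
  rw [hist_pad] at this
  exact ⟨this.1, this.2.1⟩

lemma strat_subset (hσ : WinningStratI X σ) {p : List (Set X)} {V : Set X}
    (hp : LegalL σ (p ++ [V])) : σ (p ++ [V]) ⊆ V := by
  have h1 := hσ.1 (pad (p ++ [V])) (p ++ [V]).length hp
  rw [hist_pad] at h1
  have hl : (p ++ [V]).length = p.length + 1 := by simp
  have := h1.2.2 p.length hl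
  have e : pad (p ++ [V]) p.length = V := by
    unfold pad
    rw [List.getD_eq_getElem _ _ (by simp)]
    simp
  rwa [e] at this

end helpers

section forward

variable {X : Type} [TopologicalSpace X] [BaireSpace X]

theorem no_winning_strat_of_baire (σ : List (Set X) → Set X) :
    ¬ WinningStratI X σ := by
  intro hσ
  classical
  -- legal moves after position p
  set Moves : List (Set X) → Set (Set X) :=
    fun p => {V | IsOpen V ∧ V.Nonempty ∧ V ⊆ σ p} with hMoves
  -- maximal pairwise-disjoint families
  have exS : ∀ p : List (Set X), ∃ S, Maximal (fun S => S ⊆ Moves p ∧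
      S.Pairwise fun V W => Disjoint (σ (p ++ [V])) (σ (p ++ [W]))) S := by
    intro p
    apply zorn_subset
    intro c hc hchain
    refine ⟨⋃₀ c, ⟨?_, ?_⟩, fun s hs => subset_sUnion_of_mem hs⟩
    · exact sUnion_subset fun s hs => (hc hs).1
    · intro V hV W hW hVW
      obtain ⟨s, hs, hVs⟩ := hV
      obtain ⟨t, ht, hWt⟩ := hW
      rcases hchain.total hs ht with h | h
      · exact (hc ht).2 (h hVs) hWt hVW
      · exact (hc hs).2 hVs (h hWt) hVW
  choose S hS using exS
  -- the tree of positions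
  set T : ℕ → Set (List (Set X)) :=
    fun n => Nat.rec {([] : List (Set X))}
      (fun _ Tn => {q | ∃ p ∈ Tn, ∃ V ∈ S p, q = p ++ [V]}) n with hT
  have hT0 : T 0 = {([] : List (Set X))} := rfl
  have hTsucc : ∀ n, T (n+1) = {q | ∃ p ∈ T n, ∃ V ∈ S p, q = p ++ [V]} := fun n => rfl
  -- nodes are legal
  have hlegal : ∀ n, ∀ p ∈ T n, LegalL σ p := by
    intro n
    induction n with
    | zero => intro p hp; rw [hT0] at hp; rw [hp]; exact legalL_nil
    | succ n ih =>
      intro q hq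
      rw [hTsucc] at hq
      obtain ⟨p, hp, V, hV, rfl⟩ := hq
      exact legalL_append (ih p hp) ((hS p).1.1 hV)
  -- descendants are contained
  have hsub : ∀ (p : List (Set X)) (V : Set X), V ∈ S p → LegalL σ p →
      σ (p ++ [V]) ⊆ σ p := by
    intro p V hV hp
    have h1 : σ (p ++ [V]) ⊆ V := strat_subset hσ (legalL_append hp ((hS p).1.1 hV))
    exact h1.trans ((hS p).1.1 hV).2.2
  -- disjointness at each level
  have hdisj : ∀ n, (T n).Pairwise fun p q => Disjoint (σ p) (σ q) := by
    intro n
    induction n with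
    | zero => rw [hT0]; exact Set.pairwise_singleton _ _
    | succ n ih =>
      intro q1 hq1 q2 hq2 hne
      rw [hTsucc] at hq1 hq2
      obtain ⟨p1, hp1, V1, hV1, rfl⟩ := hq1
      obtain ⟨p2, hp2, V2, hV2, rfl⟩ := hq2
      by_cases hpe : p1 = p2
      · subst hpe
        have hVne : V1 ≠ V2 := fun h => hne (by rw [h])
        exact (hS p1).1.2 hV1 hV2 hVne
      · exact ((ih hp1 hp2 hpe).mono (hsub p1 V1 hV1 (hlegal n p1 hp1))
          (hsub p2 V2 hV2 (hlegal n p2 hp2)))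
  -- the open levels
  set W : ℕ → Set X := fun n => ⋃ p ∈ T n, σ p with hWdef
  have hWopen : ∀ n, IsOpen (W n) := by
    intro n
    exact isOpen_biUnion fun p hp => (strat_legal hσ (hlegal n p hp)).1
  -- each level is dense below the previous one
  have hdense_step : ∀ n, ∀ p ∈ T n, σ p ⊆ closure (W (n+1)) := by
    intro n p hp x hx
    rw [mem_closure_iff]
    intro O hO hxO
    have hOp : (O ∩ σ p) ∈ Moves p := by
      refine ⟨hO.inter (strat_legal hσ (hlegal n p hp)).1, ⟨x, hxO, hx⟩, inter_subset_right⟩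
    have hlegOp : LegalL σ (p ++ [O ∩ σ p]) := legalL_append (hlegal n p hp) hOp
    have hne : (σ (p ++ [O ∩ σ p])).Nonempty := (strat_legal hσ hlegOp).2
    have hsubO : σ (p ++ [O ∩ σ p]) ⊆ O ∩ σ p := strat_subset hσ hlegOp
    by_cases hmem : O ∩ σ p ∈ S p
    · obtain ⟨y, hy⟩ := hne
      refine ⟨y, (hsubO hy).1, ?_⟩
      rw [hWdef]
      exact mem_biUnion (by rw [hTsucc]; exact ⟨p, hp, _, hmem, rfl⟩) hy
    · by_cases hd : ∃ V ∈ S p, ¬ Disjoint (σ (p ++ [O ∩ σ p])) (σ (p ++ [V]))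
      · obtain ⟨V, hV, hnd⟩ := hd
        rw [Set.not_disjoint_iff] at hnd
        obtain ⟨y, hy1, hy2⟩ := hnd
        refine ⟨y, (hsubO hy1).1, ?_⟩
        exact mem_biUnion (by rw [hTsucc]; exact ⟨p, hp, V, hV, rfl⟩) hy2
      · push_neg at hd
        exfalso
        apply hmem
        have hmax := (hS p).2 (y := insert (O ∩ σ p) (S p)) ?_ (subset_insert _ _)
        · exact hmax (mem_insert _ _)
        · constructor
          · exact insert_subset hOp (hS p).1.1
          · rw [Set.pairwise_insert]
            refine ⟨(hS p).1.2, fun V hV _ => ⟨hd V hV, (hd V hV).symm⟩⟩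
  have hdense : ∀ n, σ [] ⊆ closure (W n) := by
    intro n
    induction n with
    | zero =>
      have : σ [] ⊆ W 0 := by
        intro x hx
        exact mem_biUnion (by rw [hT0]; rfl) hx
      exact this.trans subset_closure
    | succ n ih =>
      have h1 : W n ⊆ closure (W (n+1)) := by
        intro x hx
        obtain ⟨p, hp, hxp⟩ := mem_iUnion₂.mp hx
        exact hdense_step n p hp hxp
      calc σ [] ⊆ closure (W n) := ih
        _ ⊆ closure (closure (W (n+1))) := closure_mono h1
        _ = closure (W (n+1)) := closure_closure
  -- the dense open sets
  set D : ℕ → Set X := fun n => W n ∪ (closure (σ []))ᶜ with hDdef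
  have hDopen : ∀ n, IsOpen (D n) := fun n => (hWopen n).union isClosed_closure.isOpen_compl
  have hDdense : ∀ n, Dense (D n) := by
    intro n x
    by_cases hx : x ∈ closure (σ [])
    · have : closure (σ []) ⊆ closure (W n) :=
        closure_minimal (hdense n) isClosed_closure
      exact closure_mono subset_union_left (this hx)
    · exact subset_closure (Or.inr hx)
  have hBigDense : Dense (⋂ n, D n) := dense_iInter_of_isOpen hDopen hDdense
  -- find a point in all levels
  have hU0 : IsOpen (σ []) ∧ (σ ([] : List (Set X))).Nonempty := strat_legal hσ legalL_nil
  obtain ⟨x, hx1, hx2⟩ := hBigDense.inter_open_nonempty (σ []) hU0.1 hU0.2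
  have hxW : ∀ n, x ∈ W n := by
    intro n
    have := mem_iInter.mp hx2 n
    rcases this with h | h
    · exact h
    · exact absurd (subset_closure hx1) h
  -- at each level the node containing x is unique; build the branch
  have key : ∀ n, ∀ p ∈ T n, x ∈ σ p →
      ∃ V ∈ S p, p ++ [V] ∈ T (n+1) ∧ x ∈ σ (p ++ [V]) := by
    intro n p hp hxp
    obtain ⟨q, hq, hxq⟩ := mem_iUnion₂.mp (hxW (n+1))
    rw [hTsucc] at hq
    obtain ⟨p', hp', V, hV, rfl⟩ := hq
    have hxp' : x ∈ σ p' := hsub p' V hV (hlegal n p' hp') hxq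
    have hpe : p' = p := by
      by_contra hne
      exact ((hdisj n hp' hp hne).ne_of_mem hxp' hxp) rfl
    subst hpe
    exact ⟨V, hV, by rw [hTsucc]; exact ⟨p', hp', V, hV, rfl⟩, hxq⟩
  choose! g hg1 hg2 hg3 using key
  -- the branch
  set B : ℕ → List (Set X) := fun n => Nat.rec ([] : List (Set X))
    (fun n b => b ++ [g n b]) n with hB
  have hBsucc : ∀ n, B (n+1) = B n ++ [g n (B n)] := fun n => rfl
  have hBmem : ∀ n, B n ∈ T n ∧ x ∈ σ (B n) := by
    intro n
    induction n with
    | zero => exact ⟨by rw [hT0]; rfl, hx1⟩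
    | succ n ih =>
      rw [hBsucc]
      exact ⟨hg2 n (B n) ih.1 ih.2, hg3 n (B n) ih.1 ih.2⟩
  -- the run of player II
  set V : ℕ → Set X := fun n => g n (B n) with hVdef
  have hhistB : ∀ n, hist V n = B n := by
    intro n
    induction n with
    | zero => simp [hist]; rfl
    | succ n ih => rw [hist_succ, ih, hBsucc]
  have hVmoves : ∀ n, V n ∈ Moves (B n) := fun n =>
    (hS (B n)).1.1 (hg1 n (B n) (hBmem n).1 (hBmem n).2)
  have hrun : ∀ n, LegalSoFar σ V n → IsOpen (V n) ∧ (V n).Nonempty ∧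
      V n ⊆ σ (hist V n) := by
    intro n _
    have := hVmoves n
    rw [hMoves] at this
    exact ⟨this.1, this.2.1, by rw [hhistB n]; exact this.2.2⟩
  have hempty := hσ.2 V hrun
  have hxin : x ∈ ⋂ n, σ (hist V n) := by
    rw [mem_iInter]
    intro n
    rw [hhistB n]
    exact (hBmem n).2
  rw [hempty] at hxin
  exact hxin

end forward

section backward

variable {X : Type} [TopologicalSpace X]

def stratOf (U : Set X) (f : ℕ → Set X) : List (Set X) → Set X :=
  fun l => if l.length = 0 then U else l.getLastD ∅ ∩ f (l.length - 1)

lemma getLastD_append_singleton {α : Type*} (l : List α) (a d : α) :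
    (l ++ [a]).getLastD d = a := by
  rw [List.getLastD_eq_getLast?, List.getLast?_concat]
  rfl

lemma hist_zero (V : ℕ → Set X) : hist V 0 = [] := rfl

lemma stratOf_hist_zero (U : Set X) (f : ℕ → Set X) (V : ℕ → Set X) :
    stratOf U f (hist V 0) = U := by
  rw [hist_zero]
  rfl

lemma stratOf_hist_succ (U : Set X) (f : ℕ → Set X) (V : ℕ → Set X) (m : ℕ) :
    stratOf U f (hist V (m+1)) = V m ∩ f m := by
  unfold stratOf
  rw [if_neg (by rw [hist_length]; omega), hist_length, hist_succ,
    getLastD_append_singleton]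
  simp

theorem winning_strat_of_not_baire (h : ¬ BaireSpace X) :
    ∃ σ : List (Set X) → Set X, WinningStratI X σ := by
  classical
  have h' : ¬ ∀ f : ℕ → Set X, (∀ n, IsOpen (f n)) → (∀ n, Dense (f n)) →
      Dense (⋂ n, f n) := fun hf => h ⟨hf⟩
  push_neg at h'
  obtain ⟨f, hfo, hfd, hfnd⟩ := h'
  rw [Dense] at hfnd
  push_neg at hfnd
  obtain ⟨x, hx⟩ := hfnd
  rw [mem_closure_iff] at hx
  push_neg at hx
  obtain ⟨U, hUo, hxU, hUf⟩ := hx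
  refine ⟨stratOf U f, ?_, ?_⟩
  · -- legality of the strategy
    intro V n hl
    match n with
    | 0 =>
      rw [stratOf_hist_zero]
      exact ⟨hUo, ⟨x, hxU⟩, fun m hm => absurd hm (by omega)⟩
    | (m+1) =>
      have hVm := hl m (Nat.lt_succ_self m)
      rw [stratOf_hist_succ]
      refine ⟨hVm.1.inter (hfo m), ?_, ?_⟩
      · exact (hfd m).inter_open_nonempty (V m) hVm.1 hVm.2.1
      · intro k hk
        have : k = m := by omega
        subst this
        exact inter_subset_left
  · -- winning
    intro V _
    rw [Set.eq_empty_iff_forall_notMem]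
    intro y hy
    rw [mem_iInter] at hy
    have hy0 := hy 0
    rw [stratOf_hist_zero] at hy0
    have hyf : ∀ n, y ∈ f n := by
      intro n
      have hyn := hy (n+1)
      rw [stratOf_hist_succ] at hyn
      exact hyn.2
    have : y ∈ U ∩ ⋂ n, f n := ⟨hy0, mem_iInter.mpr hyf⟩
    rw [hUf] at this
    exact this

end backward

/-- Oxtoby's theorem: a nonempty topological space is Baire iff player I has no
winning strategy in the Choquet game. -/
theorem stmt19 (X : Type) [TopologicalSpace X] [Nonempty X] :
    BaireSpace X ↔ ¬ ∃ σ : List (Set X) → Set X, WinningStratI X σ := by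
  constructor
  · rintro hB ⟨σ, hσ⟩
    exact no_winning_strat_of_baire σ hσ
  · intro h
    by_contra hB
    exact h (winning_strat_of_not_baire hB)
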